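/- Discrete irrotational fields are gradients (Lemma 2.4, necessity): assume (SgnCancel): for every primary cell i and every vertex ν, the sum of t_{e,ν}·n_{e,i} over all edges e incident to both i and ν equals 0; (Euler): card C + card V = card E + 1; (KerSkew): the only dual scalar field ψ with ∇̃⊥_h ψ = 0 is ψ = 0; and (KerGrad): every primary scalar field φ with ∇_h φ = 0 is constant. Then every discrete vector field u with ∇̃_h×u = 0 can be written as u = ∇_h φ for some primary discrete scalar field φ, and φ is unique up to an additive constant (unique if one further requires Σ_{i∈C} A_i φ_i = 0). -/

import Mathlib

open Finset

noncomputable section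

/-- A combinatorial staggered mesh: primary cells `C`, dual cells (vertices) `V`,
edges `E`, with areas, edge lengths, incidence relations and signs. -/
structure StagMesh (C V E : Type) [Fintype C] [Fintype V] [Fintype E]
    [DecidableEq C] [DecidableEq V] where
  /-- primary cell areas -/
  Ac : C → ℝ
  /-- dual cell areas -/
  Av : V → ℝ
  /-- primary edge lengths -/
  l : E → ℝ
  /-- dual edge lengths -/
  d : E → ℝ
  Ac_pos : ∀ i, 0 < Ac i
  Av_pos : ∀ ν, 0 < Av ν
  l_pos : ∀ e, 0 < l e
  d_pos : ∀ e, 0 < d e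
  /-- primary cells incident to an edge -/
  EC : E → Finset C
  /-- vertices (dual cells) incident to an edge -/
  EV : E → Finset V
  /-- sign `n_{e,i}` attached to an incident edge–cell pair -/
  n : E → C → ℝ
  /-- sign `t_{e,ν}` attached to an incident edge–vertex pair -/
  t : E → V → ℝ
  n_sign : ∀ e i, i ∈ EC e → n e i = 1 ∨ n e i = -1
  t_sign : ∀ e ν, ν ∈ EV e → t e ν = 1 ∨ t e ν = -1

namespace StagMesh

variable {C V E : Type} [Fintype C] [Fintype V] [Fintype E]
  [DecidableEq C] [DecidableEq V]

/-- diamond area `A_e = (1/2) l_e d_e` -/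
def Ae (M : StagMesh C V E) (e : E) : ℝ := (1 / 2) * M.l e * M.d e

/-- discrete gradient `[∇_h φ]_e = -(1/d_e) Σ_{i ~ e} n_{e,i} φ_i` -/
def grad (M : StagMesh C V E) (φ : C → ℝ) : E → ℝ :=
  fun e => -(1 / M.d e) * ∑ i ∈ M.EC e, M.n e i * φ i

/-- discrete skew gradient `[∇̃⊥_h ψ]_e = (1/l_e) Σ_{ν ~ e} t_{e,ν} ψ_ν` -/
def skewGrad (M : StagMesh C V E) (ψ : V → ℝ) : E → ℝ :=
  fun e => (1 / M.l e) * ∑ ν ∈ M.EV e, M.t e ν * ψ ν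

/-- discrete divergence `[∇_h·u]_i = (1/A_i) Σ_{e ~ i} l_e n_{e,i} u_e` -/
def dvg (M : StagMesh C V E) (u : E → ℝ) : C → ℝ :=
  fun i => (1 / M.Ac i) * ∑ e ∈ univ.filter (fun e => i ∈ M.EC e), M.l e * M.n e i * u e

/-- discrete curl `[∇̃_h×u]_ν = -(1/A_ν) Σ_{e ~ ν} d_e t_{e,ν} u_e` -/
def curl (M : StagMesh C V E) (u : E → ℝ) : V → ℝ :=
  fun ν => -(1 / M.Av ν) * ∑ e ∈ univ.filter (fun e => ν ∈ M.EV e), M.d e * M.t e ν * u e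

/-- area-weighted inner product on primary scalar fields -/
def innerC (M : StagMesh C V E) (φ φ' : C → ℝ) : ℝ := ∑ i, M.Ac i * φ i * φ' i

/-- area-weighted inner product on dual scalar fields -/
def innerV (M : StagMesh C V E) (ψ ψ' : V → ℝ) : ℝ := ∑ ν, M.Av ν * ψ ν * ψ' ν

/-- diamond-weighted inner product on discrete vector fields -/
def innerE (M : StagMesh C V E) (u u' : E → ℝ) : ℝ := ∑ e, M.Ae e * u e * u' e

/-- weighted `L²` norm on primary scalar fields -/
noncomputable def normC (M : StagMesh C V E) (φ : C → ℝ) : ℝ := Real.sqrt (M.innerC φ φ)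

/-- weighted `L²` norm on dual scalar fields -/
noncomputable def normV (M : StagMesh C V E) (ψ : V → ℝ) : ℝ := Real.sqrt (M.innerV ψ ψ)

/-- weighted `L²` norm on discrete vector fields -/
noncomputable def normE (M : StagMesh C V E) (u : E → ℝ) : ℝ := Real.sqrt (M.innerE u u)

/-- sign-cancellation condition: for every primary cell `i` and vertex `ν`,
`Σ_{e ~ i, e ~ ν} t_{e,ν} n_{e,i} = 0`. -/
def SgnCancel (M : StagMesh C V E) : Prop :=
  ∀ (i : C) (ν : V),
    ∑ e ∈ univ.filter (fun e => i ∈ M.EC e ∧ ν ∈ M.EV e), M.t e ν * M.n e i = 0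

end StagMesh

open StagMesh

namespace CFGaux

variable {C V E : Type} [Fintype C] [Fintype V] [Fintype E]
  [DecidableEq C] [DecidableEq V]

lemma Ae_pos (M : StagMesh C V E) (e : E) : 0 < M.Ae e := by
  have := M.l_pos e; have := M.d_pos e
  unfold StagMesh.Ae; positivity

lemma sum_indicator {β γ : Type*} [Fintype β] [DecidableEq β] [AddCommMonoid γ]
    (s : Finset β) (f : β → γ) :
    ∑ j ∈ s, f j = ∑ j : β, if j ∈ s then f j else 0 := by
  rw [Finset.sum_ite_mem, Finset.univ_inter]

lemma sum_sum_indicator {α β γ : Type*} [Fintype α] [Fintype β] [DecidableEq α] [DecidableEq β]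
    [AddCommMonoid γ] (s : Finset α) (t : Finset β) (f : α → β → γ) :
    ∑ i ∈ s, ∑ j ∈ t, f i j
      = ∑ i : α, ∑ j : β, if i ∈ s ∧ j ∈ t then f i j else 0 := by
  rw [sum_indicator s (fun i => ∑ j ∈ t, f i j)]
  refine Finset.sum_congr rfl fun i _ => ?_
  by_cases hi : i ∈ s
  · simp only [hi, if_true, true_and]
    exact sum_indicator t (f i)
  · simp [hi]

def gradL (M : StagMesh C V E) : (C → ℝ) →ₗ[ℝ] (E → ℝ) where
  toFun := M.grad
  map_add' φ φ' := by
    funext e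
    simp only [StagMesh.grad, Pi.add_apply, mul_add, Finset.sum_add_distrib]
  map_smul' c φ := by
    funext e
    simp only [StagMesh.grad, Pi.smul_apply, smul_eq_mul, RingHom.id_apply, Finset.mul_sum]
    exact Finset.sum_congr rfl fun i _ => by ring

def skewL (M : StagMesh C V E) : (V → ℝ) →ₗ[ℝ] (E → ℝ) where
  toFun := M.skewGrad
  map_add' ψ ψ' := by
    funext e
    simp only [StagMesh.skewGrad, Pi.add_apply, mul_add, Finset.sum_add_distrib]
  map_smul' c ψ := by
    funext e
    simp only [StagMesh.skewGrad, Pi.smul_apply, smul_eq_mul, RingHom.id_apply, Finset.mul_sum]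
    exact Finset.sum_congr rfl fun ν _ => by ring

def scaleE (M : StagMesh C V E) : (E → ℝ) ≃ₗ[ℝ] EuclideanSpace ℝ E where
  toFun u := WithLp.toLp 2 (fun e => Real.sqrt (M.Ae e) * u e)
  invFun v := fun e => v e / Real.sqrt (M.Ae e)
  map_add' u v := by ext e; simp [mul_add]
  map_smul' c u := by ext e; simp [smul_eq_mul]; ring
  left_inv u := by
    funext e
    have h : Real.sqrt (M.Ae e) ≠ 0 := by have := Ae_pos M e; positivity
    simp only [PiLp.toLp_apply]
    field_simp
  right_inv v := by
    ext e
    have h : Real.sqrt (M.Ae e) ≠ 0 := by have := Ae_pos M e; positivity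
    field_simp

lemma inner_scaleE (M : StagMesh C V E) (u v : E → ℝ) :
    inner ℝ (scaleE M u) (scaleE M v) = M.innerE u v := by
  rw [PiLp.inner_apply]
  unfold StagMesh.innerE
  refine Finset.sum_congr rfl fun e _ => ?_
  have h : Real.sqrt (M.Ae e) * Real.sqrt (M.Ae e) = M.Ae e :=
    Real.mul_self_sqrt (Ae_pos M e).le
  simp only [scaleE, RCLike.inner_apply', conj_trivial, LinearEquiv.coe_mk, PiLp.toLp_apply]
  calc Real.sqrt (M.Ae e) * u e * (Real.sqrt (M.Ae e) * v e)
      = (Real.sqrt (M.Ae e) * Real.sqrt (M.Ae e)) * u e * v e := by ring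
    _ = M.Ae e * u e * v e := by rw [h]

lemma innerE_grad_skew (M : StagMesh C V E) (hsc : M.SgnCancel) (φ : C → ℝ) (ψ : V → ℝ) :
    M.innerE (M.grad φ) (M.skewGrad ψ) = 0 := by
  classical
  unfold StagMesh.innerE
  have hterm : ∀ e : E, M.Ae e * M.grad φ e * M.skewGrad ψ e
      = ∑ i : C, ∑ ν : V,
          (if i ∈ M.EC e ∧ ν ∈ M.EV e then (-(1/2)) * ((M.t e ν * M.n e i) * (φ i * ψ ν)) else 0) := by
    intro e
    have hl := (M.l_pos e).ne'
    have hd := (M.d_pos e).ne'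
    have h1 : M.Ae e * M.grad φ e * M.skewGrad ψ e
        = ∑ i ∈ M.EC e, ∑ ν ∈ M.EV e, (-(1/2)) * ((M.t e ν * M.n e i) * (φ i * ψ ν)) := by
      have h0 : M.Ae e * M.grad φ e * M.skewGrad ψ e
          = (-(1/2)) * ((∑ i ∈ M.EC e, M.n e i * φ i) * (∑ ν ∈ M.EV e, M.t e ν * ψ ν)) := by
        unfold StagMesh.Ae StagMesh.grad StagMesh.skewGrad
        field_simp
      rw [h0, Finset.sum_mul_sum, Finset.mul_sum]
      refine Finset.sum_congr rfl fun i _ => ?_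
      rw [Finset.mul_sum]
      exact Finset.sum_congr rfl fun ν _ => by ring
    rw [h1, sum_sum_indicator]
  calc ∑ e, M.Ae e * M.grad φ e * M.skewGrad ψ e
      = ∑ e, ∑ i : C, ∑ ν : V,
          (if i ∈ M.EC e ∧ ν ∈ M.EV e then (-(1/2)) * ((M.t e ν * M.n e i) * (φ i * ψ ν)) else 0) :=
        Finset.sum_congr rfl fun e _ => hterm e
    _ = ∑ i : C, ∑ e, ∑ ν : V,
          (if i ∈ M.EC e ∧ ν ∈ M.EV e then (-(1/2)) * ((M.t e ν * M.n e i) * (φ i * ψ ν)) else 0) :=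
        Finset.sum_comm
    _ = ∑ i : C, ∑ ν : V, ∑ e,
          (if i ∈ M.EC e ∧ ν ∈ M.EV e then (-(1/2)) * ((M.t e ν * M.n e i) * (φ i * ψ ν)) else 0) :=
        Finset.sum_congr rfl fun i _ => Finset.sum_comm
    _ = 0 := by
        refine Finset.sum_eq_zero fun i _ => Finset.sum_eq_zero fun ν _ => ?_
        rw [← Finset.sum_filter]
        have h := hsc i ν
        calc ∑ e ∈ univ.filter (fun e => i ∈ M.EC e ∧ ν ∈ M.EV e),
              (-(1/2)) * ((M.t e ν * M.n e i) * (φ i * ψ ν))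
            = (∑ e ∈ univ.filter (fun e => i ∈ M.EC e ∧ ν ∈ M.EV e), M.t e ν * M.n e i)
                * ((-(1/2)) * (φ i * ψ ν)) := by
              rw [Finset.sum_mul]
              exact Finset.sum_congr rfl fun e _ => by ring
          _ = 0 := by rw [h]; ring

lemma innerE_curlfree (M : StagMesh C V E) (u : E → ℝ) (hu : M.curl u = 0) (ψ : V → ℝ) :
    M.innerE u (M.skewGrad ψ) = 0 := by
  classical
  have hv : ∀ ν : V, ∑ e ∈ univ.filter (fun e => ν ∈ M.EV e), M.d e * M.t e ν * u e = 0 := by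
    intro ν
    have h := congrFun hu ν
    unfold StagMesh.curl at h
    have hA := (M.Av_pos ν).ne'
    simp only [Pi.zero_apply, neg_mul, neg_eq_zero, mul_eq_zero] at h
    rcases h with h | h
    · exact absurd h (by positivity)
    · exact h
  unfold StagMesh.innerE
  have hterm : ∀ e : E, M.Ae e * u e * M.skewGrad ψ e
      = ∑ ν : V, (if ν ∈ M.EV e then (1/2) * ((M.d e * M.t e ν * u e) * ψ ν) else 0) := by
    intro e
    have hl := (M.l_pos e).ne'
    have h0 : M.Ae e * u e * M.skewGrad ψ e
        = ∑ ν ∈ M.EV e, (1/2) * ((M.d e * M.t e ν * u e) * ψ ν) := by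
      have h1 : M.Ae e * u e * M.skewGrad ψ e
          = (1/2) * (M.d e * u e) * (∑ ν ∈ M.EV e, M.t e ν * ψ ν) := by
        unfold StagMesh.Ae StagMesh.skewGrad
        field_simp
      rw [h1, Finset.mul_sum]
      exact Finset.sum_congr rfl fun ν _ => by ring
    rw [h0, sum_indicator]
  calc ∑ e, M.Ae e * u e * M.skewGrad ψ e
      = ∑ e, ∑ ν : V, (if ν ∈ M.EV e then (1/2) * ((M.d e * M.t e ν * u e) * ψ ν) else 0) :=
        Finset.sum_congr rfl fun e _ => hterm e
    _ = ∑ ν : V, ∑ e, (if ν ∈ M.EV e then (1/2) * ((M.d e * M.t e ν * u e) * ψ ν) else 0) :=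
        Finset.sum_comm
    _ = 0 := by
        refine Finset.sum_eq_zero fun ν _ => ?_
        rw [← Finset.sum_filter]
        calc ∑ e ∈ univ.filter (fun e => ν ∈ M.EV e),
              (1/2) * ((M.d e * M.t e ν * u e) * ψ ν)
            = (∑ e ∈ univ.filter (fun e => ν ∈ M.EV e), M.d e * M.t e ν * u e)
                * ((1/2) * ψ ν) := by
              rw [Finset.sum_mul]
              exact Finset.sum_congr rfl fun e _ => by ring
          _ = 0 := by rw [hv ν]; ring

end CFGaux

/-- discrete irrotational fields are gradients: under the standing
mesh hypotheses, every discrete vector field `u` with `∇̃_h×u = 0` is `∇_h φ`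
for some primary scalar field `φ`, unique up to an additive constant, and unique
if one requires `Σ A_i φ_i = 0`. -/
theorem curlFree_is_grad
    {C V E : Type} [Fintype C] [Fintype V] [Fintype E]
    [DecidableEq C] [DecidableEq V]
    (M : StagMesh C V E)
    (hsc : M.SgnCancel)
    (heuler : Fintype.card C + Fintype.card V = Fintype.card E + 1)
    (hks : ∀ ψ : V → ℝ, M.skewGrad ψ = 0 → ψ = 0)
    (hkg : ∀ φ : C → ℝ, M.grad φ = 0 → ∀ i j : C, φ i = φ j)
    (u : E → ℝ) (hu : M.curl u = 0) :
    (∃ φ : C → ℝ, u = M.grad φ) ∧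
    (∀ φ φ' : C → ℝ, u = M.grad φ → u = M.grad φ' → ∃ c : ℝ, ∀ i, φ i = φ' i + c) ∧
    (∃! φ : C → ℝ, (∑ i, M.Ac i * φ i) = 0 ∧ u = M.grad φ) := by
  classical
  set S := CFGaux.scaleE M with hS
  set gL : (C → ℝ) →ₗ[ℝ] EuclideanSpace ℝ E := S.toLinearMap.comp (CFGaux.gradL M) with hgL
  set sL : (V → ℝ) →ₗ[ℝ] EuclideanSpace ℝ E := S.toLinearMap.comp (CFGaux.skewL M) with hsL
  have hgL_apply : ∀ φ : C → ℝ, gL φ = S (M.grad φ) := fun φ => rfl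
  have hsL_apply : ∀ ψ : V → ℝ, sL ψ = S (M.skewGrad ψ) := fun ψ => rfl
  set G := LinearMap.range gL with hG
  set W := LinearMap.range sL with hW
  -- orthogonality of G and W
  have horth : ∀ x ∈ G, ∀ y ∈ W, inner ℝ x y = 0 := by
    rintro x ⟨φ, rfl⟩ y ⟨ψ, rfl⟩
    rw [hgL_apply, hsL_apply, CFGaux.inner_scaleE]
    exact CFGaux.innerE_grad_skew M hsc φ ψ
  -- kernels
  have hker_sL : LinearMap.ker sL = ⊥ := by
    rw [LinearMap.ker_eq_bot']
    intro ψ hψ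
    apply hks
    have h0 : S (M.skewGrad ψ) = S 0 := by rw [map_zero]; exact hψ
    exact S.injective h0
  have hker_gL_grad : ∀ φ : C → ℝ, gL φ = 0 ↔ M.grad φ = 0 := by
    intro φ
    constructor
    · intro h
      have h0 : S (M.grad φ) = S 0 := by rw [map_zero]; exact h
      exact S.injective h0
    · intro h
      rw [hgL_apply, h]; simp
  -- dimension counting
  have hrankW : Module.finrank ℝ ↥W + 0 = Fintype.card V := by
    have h := LinearMap.finrank_range_add_finrank_ker sL
    rw [hker_sL] at h
    simpa [Module.finrank_fintype_fun_eq_card] using h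
  have hrankW' : Module.finrank ℝ ↥W = Fintype.card V := by omega
  have hWle : Module.finrank ℝ ↥W ≤ Fintype.card E := by
    have := Submodule.finrank_le W
    simpa [finrank_euclideanSpace] using this
  have hCne : Nonempty C := by
    rw [← Fintype.card_pos_iff]
    omega
  obtain ⟨i₀⟩ := hCne
  have hone_ne : (fun _ : C => (1:ℝ)) ≠ 0 := by
    intro h
    have := congrFun h i₀
    simp at this
  have hker_le : LinearMap.ker gL ≤ Submodule.span ℝ {(fun _ : C => (1:ℝ))} := by
    intro φ hφ
    have hφ0 : M.grad φ = 0 := (hker_gL_grad φ).mp hφ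
    have hconst := hkg φ hφ0
    rw [Submodule.mem_span_singleton]
    refine ⟨φ i₀, ?_⟩
    funext i
    simp only [Pi.smul_apply, smul_eq_mul, mul_one]
    exact (hconst i i₀).symm
  have hspan1 : Module.finrank ℝ ↥(Submodule.span ℝ {(fun _ : C => (1:ℝ))}) = 1 :=
    finrank_span_singleton hone_ne
  have hkerle1 : Module.finrank ℝ ↥(LinearMap.ker gL) ≤ 1 := by
    have := Submodule.finrank_mono hker_le
    omega
  have hrankG : Module.finrank ℝ ↥G + Module.finrank ℝ ↥(LinearMap.ker gL)
      = Fintype.card C := by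
    have h := LinearMap.finrank_range_add_finrank_ker gL
    simpa [Module.finrank_fintype_fun_eq_card] using h
  have hGWbot : G ⊓ W = ⊥ := by
    rw [eq_bot_iff]
    rintro x ⟨hxG, hxW⟩
    have hx0 : inner ℝ x x = 0 := horth x hxG x hxW
    have : x = 0 := inner_self_eq_zero.mp hx0
    simp [this]
  have hsup : Module.finrank ℝ ↥(G ⊔ W) = Module.finrank ℝ ↥G + Module.finrank ℝ ↥W := by
    have h := Submodule.finrank_sup_add_finrank_inf_eq G W
    rw [hGWbot] at h
    simpa using h
  have hsuple : Module.finrank ℝ ↥(G ⊔ W) ≤ Fintype.card E := by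
    have := Submodule.finrank_le (G ⊔ W)
    simpa [finrank_euclideanSpace] using this
  have hker1 : Module.finrank ℝ ↥(LinearMap.ker gL) = 1 := by omega
  have hsup_top : G ⊔ W = ⊤ := by
    apply Submodule.eq_top_of_finrank_eq
    rw [finrank_euclideanSpace]
    omega
  -- grad of constants vanishes
  have hker_eq : LinearMap.ker gL = Submodule.span ℝ {(fun _ : C => (1:ℝ))} :=
    Submodule.eq_of_le_of_finrank_le hker_le (by omega)
  have hgrad_const : ∀ c : ℝ, M.grad (fun _ : C => c) = 0 := by
    intro c
    have hmem : (fun _ : C => c) ∈ LinearMap.ker gL := by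
      rw [hker_eq, Submodule.mem_span_singleton]
      exact ⟨c, by funext i; simp⟩
    exact (hker_gL_grad _).mp hmem
  -- existence
  have hmem : S u ∈ G ⊔ W := by rw [hsup_top]; trivial
  obtain ⟨g, hg, w, hw, hgw⟩ := Submodule.mem_sup.mp hmem
  have hSuw : inner ℝ (S u) w = 0 := by
    obtain ⟨ψ, rfl⟩ := hw
    rw [hsL_apply, CFGaux.inner_scaleE]
    exact CFGaux.innerE_curlfree M u hu ψ
  have hgw0 : inner ℝ g w = 0 := horth g hg w hw
  have hww : inner ℝ w w = 0 := by
    have h1 : inner ℝ (g + w) w = 0 := by rw [hgw]; exact hSuw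
    rw [inner_add_left] at h1
    linarith [hgw0]
  have hw0 : w = 0 := inner_self_eq_zero.mp hww
  have hSuG : S u ∈ G := by
    have : g = S u := by rw [← hgw, hw0, add_zero]
    rw [← this]; exact hg
  obtain ⟨φ₀, hφ₀⟩ := hSuG
  have hu_grad : u = M.grad φ₀ := by
    apply S.injective
    rw [← hφ₀]; rfl
  -- uniqueness up to constant
  have huniq : ∀ φ φ' : C → ℝ, u = M.grad φ → u = M.grad φ' → ∃ c : ℝ, ∀ i, φ i = φ' i + c := by
    intro φ φ' h h'
    have hdiff : M.grad (φ - φ') = 0 := by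
      have : (CFGaux.gradL M) (φ - φ') = (CFGaux.gradL M) φ - (CFGaux.gradL M) φ' :=
        map_sub _ _ _
      have h2 : M.grad (φ - φ') = M.grad φ - M.grad φ' := this
      rw [h2, ← h, ← h', sub_self]
    have hconst := hkg _ hdiff
    refine ⟨φ i₀ - φ' i₀, fun i => ?_⟩
    have := hconst i i₀
    simp only [Pi.sub_apply] at this
    linarith
  refine ⟨⟨φ₀, hu_grad⟩, huniq, ?_⟩
  -- normalized representative
  have hA : 0 < ∑ i, M.Ac i := Finset.sum_pos (fun i _ => M.Ac_pos i) ⟨i₀, Finset.mem_univ i₀⟩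
  set c₀ : ℝ := (∑ i, M.Ac i * φ₀ i) / (∑ i, M.Ac i) with hc₀
  set φn : C → ℝ := fun i => φ₀ i - c₀ with hφn
  have hφn_sum : (∑ i, M.Ac i * φn i) = 0 := by
    simp only [hφn, mul_sub, Finset.sum_sub_distrib, ← Finset.sum_mul]
    rw [hc₀]
    field_simp
    ring
  have hφn_grad : u = M.grad φn := by
    have : φn = φ₀ + (fun _ : C => -c₀) := by funext i; simp [hφn]; ring
    rw [this]
    have h2 : M.grad (φ₀ + (fun _ : C => -c₀)) = M.grad φ₀ + M.grad (fun _ : C => -c₀) :=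
      map_add (CFGaux.gradL M) _ _
    rw [h2, hgrad_const, add_zero, hu_grad]
  refine ⟨φn, ⟨hφn_sum, hφn_grad⟩, ?_⟩
  rintro φ' ⟨hsum', hgrad'⟩
  obtain ⟨c, hc⟩ := huniq φ' φn hgrad' hφn_grad
  have hsumc : (∑ i, M.Ac i * φ' i) = (∑ i, M.Ac i * φn i) + c * (∑ i, M.Ac i) := by
    rw [Finset.mul_sum, ← Finset.sum_add_distrib]
    refine Finset.sum_congr rfl fun i _ => ?_
    rw [hc i]; ring
  have hc0 : c = 0 := by
    rw [hsum', hφn_sum] at hsumc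
    have : c * (∑ i, M.Ac i) = 0 := by linarith
    rcases mul_eq_zero.mp this with h | h
    · exact h
    · exact absurd h hA.ne'
  funext i
  rw [hc i, hc0, add_zero]
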